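/- Let β, b ∈ ℕ^m and A ∈ ℕ^{m×n} with columns A_1,…,A_n satisfy b ≤ β and A_k ≤ β for all k, and let 𝒫 := {𝐲 ∈ ℝ^p : 𝐲 ≥ 0, Θ𝐲 = 𝐛}. Then every extreme point of 𝒫 has all entries in ℕ (i.e., is a nonnegative integer vector). -/

import Mathlib

set_option linter.unusedSectionVars false
set_option linter.unusedVariables false
set_option maxHeartbeats 1000000

open Finset
open scoped Classical

/-- Row index set: vectors `w ∈ ℕ^m` with `w ≤ β` (entrywise). -/
abbrev RowIdx (m : ℕ) (β : Fin m → ℕ) : Type := ∀ j : Fin m, Fin (β j + 1)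

/-- Column index set: pairs `(k, u)` with `1 ≤ k ≤ n` and `u ∈ ℕ^m`, `u ≤ β - A_k`. -/
abbrev ColIdx (m n : ℕ) (β : Fin m → ℕ) (A : Matrix (Fin m) (Fin n) ℕ) : Type :=
  Σ k : Fin n, ∀ j : Fin m, Fin (β j - A j k + 1)

/-- The network matrix `Θ`: `Θ[w;(k,u)] = -1` if `w = u`, `+1` if `w = u + A_k`,
and `0` otherwise. -/
noncomputable def theta (m n : ℕ) (β : Fin m → ℕ) (A : Matrix (Fin m) (Fin n) ℕ) :
    Matrix (RowIdx m β) (ColIdx m n β A) ℝ := Matrix.of fun w c =>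
  if (fun j => (w j : ℕ)) = (fun j => (c.2 j : ℕ)) then -1
  else if (fun j => (w j : ℕ)) = (fun j => (c.2 j : ℕ) + A j c.1) then 1 else 0

/-- The vector `𝐛`: `𝐛[w] = (1 if w = b else 0) - (1 if w = 0 else 0)`. -/
noncomputable def bvec (m : ℕ) (β b : Fin m → ℕ) : RowIdx m β → ℝ := fun w =>
  (if (fun j => (w j : ℕ)) = b then 1 else 0)
    - (if (fun j => (w j : ℕ)) = (fun _ => (0 : ℕ)) then 1 else 0)


section Aux

variable {R C : Type*} [Fintype R] [Fintype C]

/-- A "good column": either `-e_w` or `e_{w'} - e_w` for distinct `w, w'`. -/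
def GoodCol [DecidableEq R] (v : R → ℝ) : Prop :=
  (∃ w : R, v = -Pi.single w 1) ∨
  (∃ w w' : R, w ≠ w' ∧ v = Pi.single w' 1 - Pi.single w 1)

lemma GoodCol.pm [DecidableEq R] {v : R → ℝ} (h : GoodCol v) {w : R} (hw : v w ≠ 0) :
    v w = 1 ∨ v w = -1 := by
  rcases h with ⟨a, rfl⟩ | ⟨a, a', hne, rfl⟩ <;>
    · simp only [Pi.neg_apply, Pi.sub_apply, Pi.single_apply] at hw ⊢
      split_ifs at hw ⊢ <;> simp_all

lemma GoodCol.int [DecidableEq R] {v : R → ℝ} (h : GoodCol v) (w : R) :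
    ∃ z : ℤ, v w = z := by
  by_cases hw : v w = 0
  · exact ⟨0, by simp [hw]⟩
  · rcases h.pm hw with h1 | h1
    · exact ⟨1, by simp [h1]⟩
    · exact ⟨-1, by simp [h1]⟩

lemma GoodCol.supp_card_le [DecidableEq R] {v : R → ℝ} (h : GoodCol v) :
    (univ.filter fun w => v w ≠ 0).card ≤ 2 := by
  rcases h with ⟨a, rfl⟩ | ⟨a, a', hne, rfl⟩
  · have : (univ.filter fun w => (-Pi.single a 1 : R → ℝ) w ≠ 0) ⊆ {a} := by
      intro w hw
      simp only [mem_filter, Pi.neg_apply, Pi.single_apply] at hw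
      rcases hw with ⟨-, hw⟩
      by_contra hwa
      simp only [mem_singleton] at hwa
      simp [hwa] at hw
    calc _ ≤ ({a} : Finset R).card := card_le_card this
    _ ≤ 2 := by simp
  · have : (univ.filter fun w => (Pi.single a' 1 - Pi.single a 1 : R → ℝ) w ≠ 0)
        ⊆ {a, a'} := by
      intro w hw
      simp only [mem_filter, Pi.sub_apply, Pi.single_apply] at hw
      rcases hw with ⟨-, hw⟩
      by_contra hwa
      simp only [mem_insert, mem_singleton, not_or] at hwa
      simp [hwa.1, hwa.2] at hw
    calc _ ≤ ({a, a'} : Finset R).card := card_le_card this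
    _ ≤ 2 := card_insert_le _ _ |>.trans (by simp)

lemma card_le_of_indep_on (v : C → R → ℝ) (F : Finset R)
    (h : ∀ g : C → ℝ, (∀ w ∈ F, ∑ c, g c * v c w = 0) → ∀ c, g c = 0) :
    Fintype.card C ≤ F.card := by
  have hli : LinearIndependent ℝ (fun c => fun w : F => v c (w : R)) := by
    rw [Fintype.linearIndependent_iff]
    intro g hg
    refine h g fun w hw => ?_
    have := congrFun hg ⟨w, hw⟩
    simpa [Finset.sum_apply] using this
  have := hli.fintype_card_le_finrank
  simpa [Module.finrank_pi, Fintype.card_coe] using this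

lemma exists_unique_row [DecidableEq R] [Nonempty C] (v : C → R → ℝ)
    (hv : ∀ c, GoodCol (v c)) (hind : LinearIndependent ℝ v) :
    ∃ w : R, ∃! c : C, v c w ≠ 0 := by
  by_contra hcon
  push_neg at hcon
  -- touched rows
  set T : Finset R := univ.filter (fun w => ∃ c, v c w ≠ 0) with hT
  have hoff : ∀ w, w ∉ T → ∀ c, v c w = 0 := by
    intro w hw c
    by_contra h
    exact hw (by simp [hT]; exact ⟨c, h⟩)
  have htwo : ∀ w ∈ T, 2 ≤ (univ.filter fun c => v c w ≠ 0).card := by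
    intro w hw
    set s := univ.filter fun c => v c w ≠ 0 with hs
    rcases Nat.lt_or_ge s.card 2 with h2 | h2
    · exfalso
      interval_cases h : s.card
      · obtain ⟨c, hc⟩ : ∃ c, v c w ≠ 0 := by simpa [hT] using hw
        have : c ∈ s := by simp [hs, hc]
        simp [Finset.card_eq_zero.mp h] at this
      · obtain ⟨a, ha⟩ := Finset.card_eq_one.mp h
        refine hcon w ⟨a, ?_, ?_⟩
        · have : a ∈ s := ha ▸ mem_singleton_self a
          simpa [hs] using this
        · intro c hc
          have : c ∈ s := by simp [hs, hc]
          rw [ha] at this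
          simpa using this
    · exact h2
  -- double counting
  have hkey : 2 * T.card ≤ ∑ c : C, (univ.filter fun w => v c w ≠ 0).card := by
    calc 2 * T.card = ∑ _w ∈ T, 2 := by rw [Finset.sum_const, smul_eq_mul, mul_comm]
    _ ≤ ∑ w ∈ T, (univ.filter fun c => v c w ≠ 0).card := Finset.sum_le_sum htwo
    _ = ∑ w ∈ T, ∑ c : C, (if v c w ≠ 0 then 1 else 0) := by
        refine Finset.sum_congr rfl fun w _ => ?_
        rw [Finset.card_filter]
    _ = ∑ c : C, ∑ w ∈ T, (if v c w ≠ 0 then 1 else 0) := Finset.sum_comm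
    _ = ∑ c : C, (T.filter fun w => v c w ≠ 0).card := by
        refine Finset.sum_congr rfl fun c _ => ?_
        rw [Finset.card_filter]
    _ = ∑ c : C, (univ.filter fun w => v c w ≠ 0).card := by
        refine Finset.sum_congr rfl fun c _ => ?_
        congr 1
        ext w
        simp only [hT, mem_filter, mem_univ, true_and]
        exact ⟨fun h => h.2, fun h => ⟨⟨c, h⟩, h⟩⟩
  -- case split on whether some column is a "single"
  by_cases hsing : ∃ c : C, ∃ a : R, v c = -Pi.single a 1
  · -- some single column: total nonzero count is at most 2|C| - 1
    obtain ⟨c₀, a₀, hc₀⟩ := hsing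
    have hone : (univ.filter fun w => v c₀ w ≠ 0).card ≤ 1 := by
      have hsub : (univ.filter fun w => v c₀ w ≠ 0) ⊆ {a₀} := by
        intro w hw
        simp only [mem_filter, hc₀, Pi.neg_apply, Pi.single_apply] at hw
        rcases hw with ⟨-, hw⟩
        by_contra hwa
        simp only [mem_singleton] at hwa
        simp [hwa] at hw
      exact (card_le_card hsub).trans (by simp)
    have hbound : ∑ c : C, (univ.filter fun w => v c w ≠ 0).card
        ≤ 2 * Fintype.card C - 1 := by
      calc ∑ c : C, (univ.filter fun w => v c w ≠ 0).card
          = (univ.filter fun w => v c₀ w ≠ 0).card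
            + ∑ c ∈ univ.erase c₀, (univ.filter fun w => v c w ≠ 0).card := by
            rw [add_comm, Finset.sum_erase_add _ _ (mem_univ c₀)]
        _ ≤ 1 + ∑ c ∈ univ.erase c₀, 2 :=
            add_le_add hone (Finset.sum_le_sum fun c _ => (hv c).supp_card_le)
        _ = 1 + 2 * (Fintype.card C - 1) := by
            rw [Finset.sum_const, smul_eq_mul, Finset.card_erase_of_mem (mem_univ c₀),
              Finset.card_univ, mul_comm]
        _ ≤ 2 * Fintype.card C - 1 := by
            have : 1 ≤ Fintype.card C := Fintype.card_pos
            omega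
    have hTC : T.card < Fintype.card C := by
      have h1 : 1 ≤ Fintype.card C := Fintype.card_pos
      omega
    have : Fintype.card C ≤ T.card := by
      refine card_le_of_indep_on v T ?_
      intro g hg
      have hx : ∑ c, g c • v c = 0 := by
        funext w
        by_cases hwT : w ∈ T
        · simpa [Finset.sum_apply, smul_eq_mul] using hg w hwT
        · simp only [Finset.sum_apply, Pi.smul_apply, smul_eq_mul, Pi.zero_apply]
          exact Finset.sum_eq_zero fun c _ => by rw [hoff w hwT c, mul_zero]
      exact Fintype.linearIndependent_iff.mp hind g hx
    omega
  · -- all columns are doubles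
    push_neg at hsing
    have hdbl : ∀ c : C, ∃ a a' : R, a ≠ a' ∧ v c = Pi.single a' 1 - Pi.single a 1 := by
      intro c
      rcases hv c with ⟨a, ha⟩ | h
      · exact absurd ha (hsing c a)
      · exact h
    have hsum0 : ∀ c : C, ∑ w : R, v c w = 0 := by
      intro c
      obtain ⟨a, a', hne, hva⟩ := hdbl c
      simp [hva, Pi.single_apply, Finset.sum_sub_distrib, Finset.sum_ite_eq']
    -- T is nonempty
    have hTne : T.Nonempty := by
      obtain ⟨c⟩ := ‹Nonempty C›
      obtain ⟨a, a', hne, hva⟩ := hdbl c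
      refine ⟨a', ?_⟩
      simp only [hT, mem_filter, mem_univ, true_and]
      refine ⟨c, ?_⟩
      simp [hva, Pi.single_apply, hne, (Ne.symm hne)]
    obtain ⟨t₀, ht₀⟩ := hTne
    have hbound2 : ∑ c : C, (univ.filter fun w => v c w ≠ 0).card
        ≤ 2 * Fintype.card C := by
      calc ∑ c : C, (univ.filter fun w => v c w ≠ 0).card ≤ ∑ _c : C, 2 :=
            Finset.sum_le_sum fun c _ => (hv c).supp_card_le
        _ = 2 * Fintype.card C := by
            rw [Finset.sum_const, smul_eq_mul, Finset.card_univ, mul_comm]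
    have hTC : T.card ≤ Fintype.card C := by omega
    have hlt : (T.erase t₀).card < Fintype.card C := by
      rw [Finset.card_erase_of_mem ht₀]
      have : 1 ≤ T.card := Finset.card_pos.mpr ⟨t₀, ht₀⟩
      have : 1 ≤ Fintype.card C := Fintype.card_pos
      omega
    have : Fintype.card C ≤ (T.erase t₀).card := by
      refine card_le_of_indep_on v (T.erase t₀) ?_
      intro g hg
      set x : R → ℝ := ∑ c, g c • v c with hxdef
      have hxv : ∀ w, x w = ∑ c, g c * v c w := by
        intro w; simp [hxdef, Finset.sum_apply]
      have hxoff : ∀ w, w ≠ t₀ → x w = 0 := by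
        intro w hw
        by_cases hwT : w ∈ T
        · exact (hxv w).trans (hg w (Finset.mem_erase.mpr ⟨hw, hwT⟩))
        · rw [hxv w]
          exact Finset.sum_eq_zero fun c _ => by rw [hoff w hwT c, mul_zero]
      have hxsum : ∑ w : R, x w = 0 := by
        calc ∑ w : R, x w = ∑ w : R, ∑ c : C, g c * v c w :=
              Finset.sum_congr rfl fun w _ => hxv w
          _ = ∑ c : C, ∑ w : R, g c * v c w := Finset.sum_comm
          _ = ∑ c : C, g c * ∑ w : R, v c w := by simp [Finset.mul_sum]
          _ = 0 := by simp [hsum0]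
      have hxt₀ : x t₀ = 0 := by
        have := Finset.sum_erase_add univ x (mem_univ t₀)
        rw [hxsum] at this
        have h2 : ∑ w ∈ univ.erase t₀, x w = 0 :=
          Finset.sum_eq_zero fun w hw => hxoff w (Finset.ne_of_mem_erase hw)
        rw [h2, zero_add] at this
        exact this
      have hx : ∑ c, g c • v c = 0 := by
        funext w
        by_cases hwt : w = t₀
        · rw [← hxdef]; subst hwt; simpa using hxt₀
        · rw [← hxdef]; simpa using hxoff w hwt
      exact Fintype.linearIndependent_iff.mp hind g hx
    omega




section Aux2
variable {R C : Type*} [Fintype R] [Fintype C] [DecidableEq R] [DecidableEq C]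

lemma integral_of_indep (v : C → R → ℝ) (hv : ∀ c, GoodCol (v c)) :
    ∀ N : ℕ, ∀ y : C → ℝ, (univ.filter fun c => y c ≠ 0).card ≤ N →
    LinearIndependent ℝ (fun c : {c : C // y c ≠ 0} => v c) →
    (∀ w, ∃ z : ℤ, (∑ c, y c * v c w) = z) →
    ∀ c, ∃ z : ℤ, y c = z := by
  intro N
  induction N with
  | zero =>
    intro y hcard _ _ c
    refine ⟨0, ?_⟩
    by_contra h
    have : c ∈ univ.filter fun c => y c ≠ 0 := by
      simp only [mem_filter, mem_univ, true_and]
      intro h0; exact h (by rw [h0]; simp)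
    have := Finset.card_pos.mpr ⟨c, this⟩
    omega
  | succ N ih =>
    intro y hcard hind hint c
    by_cases hS : ∀ c, y c = 0
    · exact ⟨0, by rw [hS c]; simp⟩
    push_neg at hS
    obtain ⟨c₁, hc₁⟩ := hS
    haveI : Nonempty {c : C // y c ≠ 0} := ⟨⟨c₁, hc₁⟩⟩
    obtain ⟨w, c₀, hc₀w, huniq⟩ :=
      exists_unique_row (fun c : {c : C // y c ≠ 0} => v c) (fun c => hv c) hind
    have hsum : (∑ c, y c * v c w) = y c₀.1 * v c₀.1 w := by
      rw [Finset.sum_eq_single c₀.1]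
      · intro c _ hne
        by_cases hyc : y c = 0
        · rw [hyc]; ring
        · have hvw : v c w = 0 := by
            by_contra hvw
            exact hne (congrArg Subtype.val (huniq ⟨c, hyc⟩ hvw))
          rw [hvw]; ring
      · intro h; exact absurd (mem_univ _) h
    obtain ⟨z, hz⟩ := hint w
    have hpm := (hv c₀.1).pm hc₀w
    have hyint : ∃ z' : ℤ, y c₀.1 = z' := by
      rcases hpm with h | h
      · exact ⟨z, by rw [← hz, hsum, h, mul_one]⟩
      · refine ⟨-z, ?_⟩
        have hzz : y c₀.1 * v c₀.1 w = z := by rw [← hsum, hz]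
        rw [h] at hzz
        push_cast
        linarith
    set y' : C → ℝ := Function.update y c₀.1 0 with hy'
    have hy'app : ∀ d, y' d = if d = c₀.1 then 0 else y d := by
      intro d; simp [hy', Function.update_apply]
    have hsupp' : (univ.filter fun d => y' d ≠ 0)
        = (univ.filter fun d => y d ≠ 0).erase c₀.1 := by
      ext d
      simp only [mem_filter, mem_univ, true_and, Finset.mem_erase, hy'app]
      constructor
      · intro h
        by_cases hd : d = c₀.1
        · simp [hd] at h
        · exact ⟨hd, by simpa [hd] using h⟩
      · intro ⟨h1, h2⟩
        simpa [h1] using h2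
    have hcard' : (univ.filter fun d => y' d ≠ 0).card ≤ N := by
      rw [hsupp', Finset.card_erase_of_mem (by simp [c₀.2])]
      omega
    have hind' : LinearIndependent ℝ (fun c : {c : C // y' c ≠ 0} => v c) := by
      have hmap : ∀ d : {c : C // y' c ≠ 0}, y d.1 ≠ 0 := by
        intro d
        have := d.2
        rw [hy'app] at this
        by_cases hd : d.1 = c₀.1
        · simp [hd] at this
        · simpa [hd] using this
      have hinj : Function.Injective
          (fun d : {c : C // y' c ≠ 0} => (⟨d.1, hmap d⟩ : {c : C // y c ≠ 0})) := by
        intro a b hab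
        have h1 : a.1 = b.1 := Subtype.mk_eq_mk.mp hab
        exact Subtype.ext h1
      exact hind.comp _ hinj
    have hint' : ∀ w', ∃ z' : ℤ, (∑ d, y' d * v d w') = z' := by
      intro w'
      obtain ⟨z1, hz1⟩ := hint w'
      obtain ⟨z2, hz2⟩ := hyint
      obtain ⟨z3, hz3⟩ := (hv c₀.1).int w'
      refine ⟨z1 - z2 * z3, ?_⟩
      have hsplit : ∑ d, y' d * v d w'
          = (∑ d, y d * v d w') - y c₀.1 * v c₀.1 w' := by
        have e1 : ∑ d ∈ univ.erase c₀.1, y' d * v d w' + y' c₀.1 * v c₀.1 w'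
            = ∑ d, y' d * v d w' := Finset.sum_erase_add _ _ (mem_univ _)
        have e2 : ∑ d ∈ univ.erase c₀.1, y d * v d w' + y c₀.1 * v c₀.1 w'
            = ∑ d, y d * v d w' := Finset.sum_erase_add _ _ (mem_univ _)
        have e3 : ∑ d ∈ univ.erase c₀.1, y' d * v d w'
            = ∑ d ∈ univ.erase c₀.1, y d * v d w' := by
          refine Finset.sum_congr rfl fun d hd => ?_
          rw [hy'app, if_neg (Finset.ne_of_mem_erase hd)]
        have e4 : y' c₀.1 = 0 := by simp [hy'app]
        rw [← e1, e3, e4, zero_mul, add_zero, ← e2]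
        ring
      rw [hsplit, hz1, hz2, hz3]
      push_cast
      ring
    have hres := ih y' hcard' hind' hint'
    by_cases hc : c = c₀.1
    · rw [hc]; exact hyint
    · obtain ⟨z', hz'⟩ := hres c
      refine ⟨z', ?_⟩
      rw [← hz', hy'app, if_neg hc]


end Aux2

lemma extreme_indep {R C : Type*} [Fintype R] [Fintype C]
    (M : Matrix R C ℝ) (bb : R → ℝ) (y : C → ℝ)
    (hy : y ∈ Set.extremePoints ℝ
      {y : C → ℝ | (∀ c, 0 ≤ y c) ∧ M.mulVec y = bb}) :
    LinearIndependent ℝ (fun c : {c : C // y c ≠ 0} => (fun w => M w c.1)) := by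
  obtain ⟨⟨hpos, heq⟩, hext⟩ := hy
  by_contra hdep
  rw [Fintype.not_linearIndependent_iff] at hdep
  obtain ⟨g, hg0, i, hgi⟩ := hdep
  set G : C → ℝ := fun c => if h : y c ≠ 0 then g ⟨c, h⟩ else 0 with hG
  have hGsupp : ∀ c, y c = 0 → G c = 0 := by
    intro c h; simp [hG, h]
  have hGi : G i.1 ≠ 0 := by
    have : G i.1 = g i := by simp [hG, i.2]
    rw [this]; exact hgi
  have hMG : M.mulVec G = 0 := by
    funext w
    have h0 := congrFun hg0 w
    simp only [Finset.sum_apply, Pi.smul_apply, smul_eq_mul, Pi.zero_apply] at h0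
    -- h0 : ∑ c : subtype, g c * M w c.1 = 0
    have e1 : ∑ c : C, M w c * G c = ∑ c ∈ univ.filter (fun c => y c ≠ 0), M w c * G c := by
      symm
      apply Finset.sum_subset (Finset.filter_subset _ _)
      intro c _ hc
      simp only [mem_filter, mem_univ, true_and, not_not] at hc
      rw [hGsupp c hc, mul_zero]
    have e2 : ∑ c ∈ univ.filter (fun c => y c ≠ 0), M w c * G c
        = ∑ c : {c : C // y c ≠ 0}, M w c.1 * G c.1 :=
      Finset.sum_subtype _ (by simp) _
    have e3 : ∑ c : {c : C // y c ≠ 0}, M w c.1 * G c.1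
        = ∑ c : {c : C // y c ≠ 0}, g c * M w c.1 := by
      refine Finset.sum_congr rfl fun c _ => ?_
      obtain ⟨c1, hc1⟩ := c
      simp only [hG]
      rw [dif_pos hc1]
      ring
    have e0 : M.mulVec G w = ∑ c : C, M w c * G c := rfl
    rw [Pi.zero_apply, e0, e1, e2, e3, h0]
  -- choose epsilon
  set Sf : Finset C := univ.filter fun c => y c ≠ 0 with hSf
  have hSne : Sf.Nonempty := ⟨i.1, by simp [hSf, i.2]⟩
  set ε : ℝ := Sf.inf' hSne fun c => y c / (|G c| + 1) with hε
  have hεpos : 0 < ε := by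
    rw [hε, Finset.lt_inf'_iff]
    intro c hc
    have hyc : y c ≠ 0 := by simpa [hSf] using hc
    have : 0 < y c := lt_of_le_of_ne (hpos c) (Ne.symm hyc)
    positivity
  have hbound : ∀ c, ε * |G c| ≤ y c := by
    intro c
    by_cases hyc : y c = 0
    · rw [hGsupp c hyc, hyc]; simp
    · have hcS : c ∈ Sf := by simp [hSf, hyc]
      have h1 : ε ≤ y c / (|G c| + 1) := Finset.inf'_le _ hcS
      have h2 : (0:ℝ) < |G c| + 1 := by positivity
      have h3 : ε * (|G c| + 1) ≤ y c := by
        rw [div_eq_mul_inv] at h1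
        calc ε * (|G c| + 1) ≤ (y c * (|G c| + 1)⁻¹) * (|G c| + 1) := by
              apply mul_le_mul_of_nonneg_right h1 (le_of_lt h2)
          _ = y c := by field_simp
      nlinarith [abs_nonneg (G c), hεpos]
  have hmem : ∀ s : ℝ, |s| ≤ ε → (y + s • G) ∈
      {y : C → ℝ | (∀ c, 0 ≤ y c) ∧ M.mulVec y = bb} := by
    intro s hs
    constructor
    · intro c
      have h1 : |s * G c| ≤ ε * |G c| := by
        rw [abs_mul]
        apply mul_le_mul_of_nonneg_right hs (abs_nonneg _)
      have h2 := (hbound c)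
      have h3 : -(y c) ≤ s * G c := by
        have := neg_abs_le (s * G c)
        linarith
      simpa using by linarith [h3]
    · rw [Matrix.mulVec_add, heq, Matrix.mulVec_smul, hMG]
      simp
  have hm1 := hmem ε (by rw [abs_of_pos hεpos])
  have hm2 := hmem (-ε) (by rw [abs_neg, abs_of_pos hεpos])
  have hseg : y ∈ openSegment ℝ (y + ε • G) (y + (-ε) • G) := by
    refine ⟨1/2, 1/2, by norm_num, by norm_num, by norm_num, ?_⟩
    funext c
    simp only [Pi.add_apply, Pi.smul_apply, smul_eq_mul]
    ring
  have h1 := hext hm1 hm2 hseg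
  have : ε * G i.1 = 0 := by
    have := congrFun h1 i.1
    simp only [Pi.add_apply, Pi.smul_apply, smul_eq_mul] at this
    linarith
  rcases mul_eq_zero.mp this with h | h
  · exact absurd h (ne_of_gt hεpos)
  · exact hGi h

/-- Every extreme point of `𝒫 = {𝐲 ≥ 0 : Θ𝐲 = 𝐛}` is a nonnegative integer vector. -/
theorem stmt_11 (m n : ℕ) (hm : 0 < m) (hn : 0 < n)
    (A : Matrix (Fin m) (Fin n) ℕ) (β b : Fin m → ℕ)
    (hb : ∀ j, b j ≤ β j) (hA : ∀ k j, A j k ≤ β j) :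
    ∀ y ∈ Set.extremePoints ℝ
      {y : ColIdx m n β A → ℝ | (∀ c, 0 ≤ y c) ∧ (theta m n β A).mulVec y = bvec m β b},
      ∀ c, ∃ N : ℕ, y c = (N : ℝ) := by
  classical
  intro y hy c'
  have hmem := hy.1
  obtain ⟨hpos, heq⟩ := hmem
  have hind := extreme_indep (theta m n β A) (bvec m β b) y hy
  -- the columns are good
  have hcol : ∀ c : ColIdx m n β A, GoodCol (fun w => theta m n β A w c) := by
    intro c
    have hlt₀ : ∀ j, (c.2 j : ℕ) < β j + 1 := by
      intro j
      have h1 := (c.2 j).isLt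
      have h2 := Nat.sub_le (β j) (A j c.1)
      omega
    have hlt₁ : ∀ j, (c.2 j : ℕ) + A j c.1 < β j + 1 := by
      intro j
      have h1 := (c.2 j).isLt
      have h2 := hA c.1 j
      omega
    set w₀ : RowIdx m β := fun j => ⟨(c.2 j : ℕ), hlt₀ j⟩ with hw₀
    set w₁ : RowIdx m β := fun j => ⟨(c.2 j : ℕ) + A j c.1, hlt₁ j⟩ with hw₁
    have key : ∀ w : RowIdx m β, theta m n β A w c
        = (if w = w₀ then -1 else if w = w₁ then 1 else 0) := by
      intro w
      have h1 : ((fun j => (w j : ℕ)) = fun j => (c.2 j : ℕ)) ↔ w = w₀ := by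
        constructor
        · intro h; funext j; exact Fin.ext (congrFun h j)
        · intro h; subst h; rfl
      have h2 : ((fun j => (w j : ℕ)) = fun j => (c.2 j : ℕ) + A j c.1) ↔ w = w₁ := by
        constructor
        · intro h; funext j; exact Fin.ext (congrFun h j)
        · intro h; subst h; rfl
      rw [theta]
      simp only [Matrix.of_apply]
      rw [if_congr h1 rfl rfl, if_congr h2 rfl rfl]
    by_cases hc : w₀ = w₁
    · left
      refine ⟨w₀, ?_⟩
      funext w
      rw [key w]
      by_cases hw : w = w₀
      · simp [hw, Pi.single_apply]
      · have hw1 : w ≠ w₁ := hc ▸ hw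
        simp [hw, hw1, Pi.single_apply]
    · right
      refine ⟨w₀, w₁, hc, ?_⟩
      funext w
      rw [key w]
      by_cases hw : w = w₀
      · have hw1 : w ≠ w₁ := by rw [hw]; exact hc
        simp [hw, hw1, Pi.single_apply, hc]
      · by_cases hw1 : w = w₁
        · simp [hw, hw1, Pi.single_apply, Ne.symm hc]
        · simp [hw, hw1, Pi.single_apply]
  -- integer right-hand side
  have hint : ∀ w, ∃ z : ℤ, (∑ c, y c * theta m n β A w c) = z := by
    intro w
    have h1 : (theta m n β A).mulVec y w = bvec m β b w := congrFun heq w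
    have h2 : (∑ c, y c * theta m n β A w c) = (theta m n β A).mulVec y w := by
      rw [Matrix.mulVec, dotProduct]
      exact Finset.sum_congr rfl fun c _ => mul_comm _ _
    rw [h2, h1, bvec]
    by_cases hb1 : (fun j => (w j : ℕ)) = b <;>
      by_cases hb2 : (fun j => (w j : ℕ)) = (fun _ => (0 : ℕ))
    · exact ⟨0, by rw [if_pos hb1, if_pos hb2]; norm_num⟩
    · exact ⟨1, by rw [if_pos hb1, if_neg hb2]; norm_num⟩
    · exact ⟨-1, by rw [if_neg hb1, if_pos hb2]; norm_num⟩
    · exact ⟨0, by rw [if_neg hb1, if_neg hb2]; norm_num⟩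
  obtain ⟨z, hz⟩ := integral_of_indep (fun c w => theta m n β A w c) hcol
    (univ.filter fun c => y c ≠ 0).card y le_rfl hind hint c'
  have hznn : 0 ≤ z := by
    have : (0:ℝ) ≤ (z:ℝ) := hz ▸ hpos c'
    exact_mod_cast this
  refine ⟨z.toNat, ?_⟩
  rw [hz]
  exact_mod_cast (Int.toNat_of_nonneg hznn).symm
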